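/- arXiv:1305.2375 — 7 statements merged into one kernel-verified Lean document; each statement's English description precedes it below -/
import Mathlib

section
/- For every function w in H^1(0,N) (continuous with square-integrable derivative) and all positive reals α and N, one has M · ∫₀^N w(t)² dt ≤ α·w(0)² + ∫₀^N w'(t)² dt, where M = π²α/(N(4αN+π²)). -/
open Real

/-- Becker–Stark inequality (upper bound form). -/
lemma becker_stark {x : ℝ} (hx0 : 0 ≤ x) (hx : x < π/2) :
    (π^2 - 4*x^2) * Real.sin x ≤ π^2 * x * Real.cos x := by
  set g : ℝ → ℝ := fun y => 4*y*Real.cos y - (π^2-8)*Real.sin y with hg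
  set f : ℝ → ℝ := fun y => π^2*y*Real.cos y - (π^2-4*y^2)*Real.sin y with hf
  have hπ : 0 < π/2 := by positivity
  -- derivative of f
  have hfd : ∀ y : ℝ, HasDerivAt f (y * g y) y := by
    intro y
    have h1 : HasDerivAt (fun y : ℝ => π^2*y*Real.cos y)
        (π^2 * Real.cos y + π^2*y*(-Real.sin y)) y := by
      exact (((hasDerivAt_id y).const_mul (π^2)).mul (Real.hasDerivAt_cos y)).congr_deriv (by simp)
    have h2 : HasDerivAt (fun y : ℝ => (π^2-4*y^2)*Real.sin y)
        ((-(4*(2*y^1))) * Real.sin y + (π^2-4*y^2)*Real.cos y) y := by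
      have h3 : HasDerivAt (fun y : ℝ => π^2-4*y^2) (-(4*(2*y^1))) y := by
        simpa using (((hasDerivAt_pow 2 y).const_mul (4:ℝ)).const_sub (π^2))
      exact h3.mul (Real.hasDerivAt_sin y)
    have := h1.sub h2
    refine this.congr_deriv ?_
    simp only [hg]; ring
  -- g is concave on [0, π/2]
  have hgconc : ConcaveOn ℝ (Set.Icc 0 (π/2)) g := by
    apply concaveOn_of_hasDerivWithinAt2_nonpos (convex_Icc _ _)
      (f' := fun y => (12-π^2)*Real.cos y - 4*y*Real.sin y)
      (f'' := fun y => -(12-π^2)*Real.sin y - (4*Real.sin y + 4*y*Real.cos y))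
    · intro y hy
      have h1 : HasDerivAt (fun y : ℝ => 4*y*Real.cos y)
          (4 * Real.cos y + 4*y*(-Real.sin y)) y := by
        exact (((hasDerivAt_id y).const_mul (4:ℝ)).mul (Real.hasDerivAt_cos y)).congr_deriv (by simp)
      have h2 : HasDerivAt (fun y : ℝ => (π^2-8)*Real.sin y) ((π^2-8)*Real.cos y) y :=
        (Real.hasDerivAt_sin y).const_mul _
      exact ((h1.sub h2).continuousAt).continuousWithinAt
    · intro y hy
      have h1 : HasDerivAt (fun y : ℝ => 4*y*Real.cos y)
          (4 * Real.cos y + 4*y*(-Real.sin y)) y := by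
        exact (((hasDerivAt_id y).const_mul (4:ℝ)).mul (Real.hasDerivAt_cos y)).congr_deriv (by simp)
      have h2 : HasDerivAt (fun y : ℝ => (π^2-8)*Real.sin y) ((π^2-8)*Real.cos y) y :=
        (Real.hasDerivAt_sin y).const_mul _
      have h3 : HasDerivAt g ((12-π^2)*Real.cos y - 4*y*Real.sin y) y := by
        refine (h1.sub h2).congr_deriv ?_; ring
      exact h3.hasDerivWithinAt
    · intro y hy
      have h1 : HasDerivAt (fun y : ℝ => (12-π^2)*Real.cos y) ((12-π^2)*(-Real.sin y)) y :=
        (Real.hasDerivAt_cos y).const_mul _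
      have h2 : HasDerivAt (fun y : ℝ => 4*y*Real.sin y)
          (4*Real.sin y + 4*y*(Real.cos y)) y := by
        exact (((hasDerivAt_id y).const_mul (4:ℝ)).mul (Real.hasDerivAt_sin y)).congr_deriv (by simp)
      have h3 : HasDerivAt (fun y : ℝ => (12-π^2)*Real.cos y - 4*y*Real.sin y)
          (-(12-π^2)*Real.sin y - (4*Real.sin y + 4*y*Real.cos y)) y := by
        refine (h1.sub h2).congr_deriv ?_; ring
      exact h3.hasDerivWithinAt
    · intro y hy
      rw [interior_Icc] at hy
      have hs : 0 ≤ Real.sin y := Real.sin_nonneg_of_nonneg_of_le_pi hy.1.le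
        (by linarith [hy.2, pi_pos])
      have hc : 0 ≤ Real.cos y := Real.cos_nonneg_of_mem_Icc
        ⟨by linarith [hy.1], hy.2.le⟩
      have hπ2 : π^2 ≤ 16 := by nlinarith [pi_lt_d2]
      nlinarith [hy.1]
  have hg0 : g 0 = 0 := by simp [hg]
  have hfπ : f (π/2) = 0 := by
    simp [hf, Real.cos_pi_div_two, Real.sin_pi_div_two]
    ring
  have hf0 : f 0 = 0 := by simp [hf]
  -- main claim : f x ≥ 0
  have key : 0 ≤ f x := by
    rcases eq_or_lt_of_le hx0 with h0 | h0
    · rw [← h0, hf0]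
    rcases le_or_gt 0 (g x) with hgx | hgx
    · -- g ≥ 0 on [0,x], f monotone there
      have hmono : MonotoneOn f (Set.Icc 0 x) := by
        apply monotoneOn_of_hasDerivWithinAt_nonneg (convex_Icc _ _)
          (f' := fun y => y * g y)
        · exact fun y hy => ((hfd y).continuousAt).continuousWithinAt
        · intro y hy; exact (hfd y).hasDerivWithinAt
        · intro y hy
          rw [interior_Icc] at hy
          have hy1 : (0:ℝ) ≤ y := hy.1.le
          have hyx : y/x ≤ 1 := by rw [div_le_one h0]; exact hy.2.le
          have hygx : 0 ≤ g y := by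
            have hcomb := hgconc.2 (Set.mem_Icc.2 ⟨le_refl (0:ℝ), hπ.le⟩)
              (Set.mem_Icc.2 ⟨hx0, hx.le⟩)
              (show (0:ℝ) ≤ 1 - y/x by linarith)
              (show (0:ℝ) ≤ y/x by positivity) (by ring)
            have hyy : (1 - y/x) • (0:ℝ) + (y/x) • x = y := by
              field_simp
              simp only [smul_eq_mul, mul_zero, zero_add]; exact div_mul_cancel₀ y h0.ne'
            rw [hyy, hg0] at hcomb
            simp only [smul_eq_mul, mul_zero, zero_add] at hcomb
            calc (0:ℝ) ≤ (y/x) * g x := by positivity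
              _ ≤ g y := hcomb
          positivity
      have := hmono (Set.mem_Icc.2 ⟨le_refl 0, hx0⟩) (Set.mem_Icc.2 ⟨hx0, le_refl x⟩) hx0
      rwa [hf0] at this
    · -- g x < 0 ⇒ g ≤ 0 on [x, π/2], f antitone there
      have hanti : AntitoneOn f (Set.Icc x (π/2)) := by
        apply antitoneOn_of_hasDerivWithinAt_nonpos (convex_Icc _ _)
          (f' := fun y => y * g y)
        · exact fun y hy => ((hfd y).continuousAt).continuousWithinAt
        · intro y hy; exact (hfd y).hasDerivWithinAt
        · intro y hy
          rw [interior_Icc] at hy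
          have hy0 : 0 < y := lt_trans h0 hy.1
          have hxy : x/y ≤ 1 := by rw [div_le_one hy0]; exact hy.1.le
          have hgy : g y ≤ 0 := by
            have hcomb := hgconc.2 (Set.mem_Icc.2 ⟨le_refl (0:ℝ), hπ.le⟩)
              (Set.mem_Icc.2 ⟨hy0.le, hy.2.le⟩)
              (show (0:ℝ) ≤ 1 - x/y by linarith)
              (show (0:ℝ) ≤ x/y by positivity) (by ring)
            have hyy : (1 - x/y) • (0:ℝ) + (x/y) • y = x := by
              field_simp
              simp only [smul_eq_mul, mul_zero, zero_add]; exact div_mul_cancel₀ x hy0.ne'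
            rw [hyy, hg0] at hcomb
            simp only [smul_eq_mul, mul_zero, zero_add] at hcomb
            -- hcomb : x/y * g y ≤ g x < 0
            by_contra hcon
            push_neg at hcon
            have h5 := mul_pos (div_pos h0 hy0) hcon
            exact lt_irrefl (0:ℝ) (h5.trans_le (hcomb.trans hgx.le))
          exact mul_nonpos_of_nonneg_of_nonpos hy0.le hgy
      have := hanti (Set.mem_Icc.2 ⟨le_refl x, hx.le⟩) (Set.mem_Icc.2 ⟨hx.le, le_refl _⟩) hx.le
      rwa [hfπ] at this
  simp only [hf] at key
  linarith
open MeasureTheory Real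

theorem trace_inequality_interval
    (w w' : ℝ → ℝ) (α N : ℝ) (hα : 0 < α) (hN : 0 < N)
    (hderiv : ∀ t ∈ Set.Icc (0:ℝ) N, HasDerivAt w (w' t) t)
    (hw2 : IntervalIntegrable (fun t => (w t)^2) volume 0 N)
    (hw'2 : IntervalIntegrable (fun t => (w' t)^2) volume 0 N) :
    (π^2 * α / (N * (4 * α * N + π^2))) * ∫ t in (0:ℝ)..N, (w t)^2
      ≤ α * (w 0)^2 + ∫ t in (0:ℝ)..N, (w' t)^2 := by
  have hπ := pi_pos
  set M := π^2 * α / (N * (4 * α * N + π^2)) with hM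
  have hden : (0:ℝ) < N * (4 * α * N + π^2) := by positivity
  have hMpos : 0 < M := by rw [hM]; positivity
  have hMid : M * (N * (4*α*N + π^2)) = π^2*α := by
    rw [hM]; field_simp
  set s := Real.sqrt M with hs
  have hs2 : s^2 = M := Real.sq_sqrt hMpos.le
  have hspos : 0 < s := Real.sqrt_pos.2 hMpos
  set b := s * N with hb
  have hbpos : 0 < b := mul_pos hspos hN
  have hb2M : b^2 = M*N^2 := by rw [hb, mul_pow, hs2]
  have hMN2 : M*N^2 < π^2/4 := by
    have h5 : 0 < π^2*(M*N) := by positivity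
    have h6 : 4*α*(M*N^2) = π^2*α - π^2*(M*N) := by linear_combination hMid
    nlinarith [h5, h6]
  have hblt : b < π/2 := by
    apply lt_of_pow_lt_pow_left₀ 2 (by positivity)
    rw [hb2M]; nlinarith
  have hcosb : 0 < Real.cos b := Real.cos_pos_of_mem_Ioo ⟨by linarith, hblt⟩
  have h4b2 : 0 < π^2 - 4*b^2 := by rw [hb2M]; linarith
  have hkey : α*(π^2 - 4*b^2) = π^2 * (M*N) := by
    rw [hb2M]; linear_combination -hMid
  have hsb : s*b = M*N := by rw [hb, ← mul_assoc, ← sq, hs2]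
  -- ρ 0 ≤ α via Becker–Stark
  have hρ0le : s * Real.tan b ≤ α := by
    have hbs := becker_stark hbpos.le hblt
    have h3 : (π^2-4*b^2) * (s * Real.sin b) ≤ (π^2-4*b^2) * (α * Real.cos b) := by
      calc (π^2-4*b^2) * (s * Real.sin b) = s*((π^2-4*b^2)*Real.sin b) := by ring
        _ ≤ s*(π^2*b*Real.cos b) := by
            exact mul_le_mul_of_nonneg_left hbs hspos.le
        _ = π^2*(s*b)*Real.cos b := by ring
        _ = π^2*(M*N)*Real.cos b := by rw [hsb]
        _ = (α*(π^2-4*b^2))*Real.cos b := by rw [hkey]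
        _ = (π^2-4*b^2)*(α*Real.cos b) := by ring
    have h4 := le_of_mul_le_mul_left h3 h4b2
    rw [Real.tan_eq_sin_div_cos, mul_div_assoc' ]
    rw [div_le_iff₀ hcosb]
    linarith
  -- the Riccati supersolution ρ
  set ρ : ℝ → ℝ := fun t => s * Real.tan (s*(N-t)) with hρ
  have hargmem : ∀ t ∈ Set.Icc (0:ℝ) N, 0 ≤ s*(N-t) ∧ s*(N-t) ≤ b := by
    intro t ht
    constructor
    · have : 0 ≤ N - t := by linarith [ht.2]
      positivity
    · rw [hb]; nlinarith [ht.1, hspos]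
  have hcosarg : ∀ t ∈ Set.Icc (0:ℝ) N, 0 < Real.cos (s*(N-t)) := by
    intro t ht
    obtain ⟨h1, h2⟩ := hargmem t ht
    exact Real.cos_pos_of_mem_Ioo ⟨by linarith, by linarith⟩
  have htansq : ∀ y:ℝ, Real.cos y ≠ 0 → 1/Real.cos y^2 = 1 + Real.tan y^2 := by
    intro y hc
    have hss := Real.sin_sq_add_cos_sq y
    rw [Real.tan_eq_sin_div_cos, div_pow]
    field_simp
    linarith
  have hρd : ∀ t ∈ Set.Icc (0:ℝ) N, HasDerivAt ρ (-(M + (ρ t)^2)) t := by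
    intro t ht
    have hcos := hcosarg t ht
    have hu : HasDerivAt (fun t : ℝ => s*(N-t)) (s * (-1)) t := by
      exact (((hasDerivAt_id t).const_sub N)).const_mul s
    have htan := (Real.hasDerivAt_tan hcos.ne').comp t hu
    have := htan.const_mul s
    refine this.congr_deriv ?_
    symm
    show -(M + (s * Real.tan (s*(N-t)))^2) = s * (1/Real.cos (s*(N-t))^2 * (s * -1))
    rw [htansq _ hcos.ne']
    linear_combination hs2
  have hρc : ContinuousOn ρ (Set.Icc 0 N) :=
    fun t ht => ((hρd t ht).continuousAt).continuousWithinAt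
  have hρN : ρ N = 0 := by simp [hρ]
  have hρ0 : ρ 0 = s * Real.tan b := by simp [hρ, hb]
  -- continuity of w
  have hwc : ContinuousOn w (Set.Icc 0 N) :=
    fun t ht => ((hderiv t ht).continuousAt).continuousWithinAt
  -- measurability of w'
  have hw'meas : AEStronglyMeasurable w' (volume.restrict (Set.Ioc 0 N)) := by
    have hm : Measurable (deriv w) := measurable_deriv w
    apply hm.aestronglyMeasurable.congr
    rw [Filter.EventuallyEq, ae_restrict_iff' measurableSet_Ioc]
    exact ae_of_all _ fun t ht => ((hderiv t ⟨ht.1.le, ht.2⟩).deriv)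
  -- integrability lemmas
  have hgint : IntegrableOn (fun t => (1 + (w' t)^2)/2) (Set.Ioc 0 N) volume := by
    have h1 : IntegrableOn (fun t => (w' t)^2) (Set.Ioc 0 N) volume :=
      (intervalIntegrable_iff_integrableOn_Ioc_of_le hN.le).1 hw'2
    have h2 : IntegrableOn (fun _ : ℝ => (1:ℝ)) (Set.Ioc 0 N) volume :=
      integrableOn_const measure_Ioc_lt_top.ne
    exact (h2.add h1).div_const 2
  have habs : ∀ x : ℝ, |x| ≤ (1 + x^2)/2 := by
    intro x; nlinarith [sq_nonneg (|x| - 1), sq_abs x, abs_nonneg x]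
  have hw'int : IntervalIntegrable w' volume 0 N := by
    rw [intervalIntegrable_iff_integrableOn_Ioc_of_le hN.le]
    apply hgint.mono' hw'meas
    rw [ae_restrict_iff' measurableSet_Ioc]
    exact ae_of_all _ fun t _ => by rw [Real.norm_eq_abs]; exact habs (w' t)
  -- bound on ρ * w
  have hρwc : ContinuousOn (fun t => ρ t * w t) (Set.Icc 0 N) := hρc.mul hwc
  obtain ⟨C, hC⟩ := isCompact_Icc.exists_bound_of_continuousOn hρwc
  have hC0 : 0 ≤ C := le_trans (norm_nonneg _) (hC 0 ⟨le_refl 0, hN.le⟩)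
  have hρww' : IntervalIntegrable (fun t => ρ t * w t * w' t) volume 0 N := by
    rw [intervalIntegrable_iff_integrableOn_Ioc_of_le hN.le]
    apply Integrable.mono' (hgint.const_mul C)
    · exact ((hρwc.mono Set.Ioc_subset_Icc_self).aestronglyMeasurable
        measurableSet_Ioc).mul hw'meas
    · rw [ae_restrict_iff' measurableSet_Ioc]
      refine ae_of_all _ fun t ht => ?_
      have h1 : ‖ρ t * w t‖ ≤ C := hC t ⟨ht.1.le, ht.2⟩
      calc ‖ρ t * w t * w' t‖ = ‖ρ t * w t‖ * |w' t| := by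
            rw [norm_mul, Real.norm_eq_abs (w' t)]
        _ ≤ C * ((1 + (w' t)^2)/2) := by
            apply mul_le_mul h1 (habs (w' t)) (abs_nonneg _) hC0
  have hρ2w2 : IntervalIntegrable (fun t => (ρ t * w t)^2) volume 0 N := by
    apply ContinuousOn.intervalIntegrable
    rw [Set.uIcc_of_le hN.le]
    exact hρwc.pow 2
  set I := ∫ t in (0:ℝ)..N, (w t)^2 with hI
  set A := ∫ t in (0:ℝ)..N, (w' t)^2 with hA
  set Cq := ∫ t in (0:ℝ)..N, (ρ t * w t)^2 with hCq
  set B := ∫ t in (0:ℝ)..N, ρ t * w t * w' t with hB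
  -- FTC for ρ * w^2
  have hFTC : ∫ t in (0:ℝ)..N, ((-(M*(w t)^2 + (ρ t*w t)^2)) + 2*(ρ t*w t*w' t))
      = ρ N * (w N)^2 - ρ 0 * (w 0)^2 := by
    apply intervalIntegral.integral_eq_sub_of_hasDerivAt
    · intro t ht
      rw [Set.uIcc_of_le hN.le] at ht
      have h1 := (hρd t ht).mul ((hderiv t ht).pow 2)
      refine h1.congr_deriv ?_
      push_cast
      simp only [Pi.pow_apply]
      ring
    · apply IntervalIntegrable.add
      · exact ((hw2.const_mul M).add hρ2w2).neg
      · exact hρww'.const_mul 2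
  have hterm1 : IntervalIntegrable (fun t => -(M*(w t)^2 + (ρ t*w t)^2)) volume 0 N :=
    ((hw2.const_mul M).add hρ2w2).neg
  have hsplit : ∫ t in (0:ℝ)..N, ((-(M*(w t)^2 + (ρ t*w t)^2)) + 2*(ρ t*w t*w' t))
      = -(M*I + Cq) + 2*B := by
    rw [intervalIntegral.integral_add hterm1 (hρww'.const_mul 2)]
    have e2 : ∫ t in (0:ℝ)..N, -(M*(w t)^2 + (ρ t*w t)^2) = -(M*I + Cq) := by
      rw [intervalIntegral.integral_neg,
        intervalIntegral.integral_add (hw2.const_mul M) hρ2w2,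
        intervalIntegral.integral_const_mul]
    rw [e2, intervalIntegral.integral_const_mul]
  have e1 : -(M*I + Cq) + 2*B = -(ρ 0 * (w 0)^2) := by
    rw [← hsplit, hFTC, hρN]; ring
  -- positivity of the square
  have hpos : 0 ≤ A - 2*B + Cq := by
    have h1 : ∫ t in (0:ℝ)..N, (w' t - ρ t*w t)^2 = A - 2*B + Cq := by
      rw [show (fun t => (w' t - ρ t*w t)^2)
          = fun t => ((w' t)^2 - 2*(ρ t*w t*w' t) + (ρ t*w t)^2) from funext fun t => by ring]
      rw [intervalIntegral.integral_add (hw'2.sub (hρww'.const_mul 2)) hρ2w2,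
        intervalIntegral.integral_sub hw'2 (hρww'.const_mul 2),
        intervalIntegral.integral_const_mul]
    rw [← h1]
    apply intervalIntegral.integral_nonneg hN.le
    intro u _; positivity
  -- conclude
  have hρw0 : ρ 0 * (w 0)^2 ≤ α * (w 0)^2 := by
    apply mul_le_mul_of_nonneg_right _ (sq_nonneg _)
    rw [hρ0]; exact hρ0le
  linarith
end

section
/- For every function w : [0,∞) → ℝ with w ∈ H^1_loc, w' ∈ L²(0,∞), and w(t) → 0 suitably (w ∈ H¹(0,∞)), and every ν > 0, one has (ν/2)·w(0)² + ∫₀^∞ w'(t)² dt ≥ (1/4)·∫₀^∞ ν²/(νt+1)² · w(t)² dt. -/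
open MeasureTheory Real Filter Set

theorem hardy_type_halfline
    (w w' : ℝ → ℝ) (ν : ℝ) (hν : 0 < ν)
    (hderiv : ∀ t ∈ Set.Ici (0:ℝ), HasDerivAt w (w' t) t)
    (hw2 : IntegrableOn (fun t => (w t)^2) (Set.Ioi (0:ℝ)) volume)
    (hw'2 : IntegrableOn (fun t => (w' t)^2) (Set.Ioi (0:ℝ)) volume) :
    (ν / 2) * (w 0)^2 + ∫ t in Set.Ioi (0:ℝ), (w' t)^2
      ≥ (1/4) * ∫ t in Set.Ioi (0:ℝ), ν^2 / (ν * t + 1)^2 * (w t)^2 := by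
  set φ : ℝ → ℝ := fun t => ν / (2 * (ν * t + 1)) with hφdef
  have hu : ∀ t ∈ Set.Ici (0:ℝ), 0 < ν * t + 1 := fun t ht => by
    have := mul_nonneg hν.le ht; linarith
  have hφpos : ∀ t ∈ Set.Ici (0:ℝ), 0 < φ t := fun t ht =>
    div_pos hν (by linarith [hu t ht])
  have hφle : ∀ t ∈ Set.Ici (0:ℝ), φ t ≤ ν / 2 := by
    intro t ht
    have h1 : (2:ℝ) ≤ 2 * (ν * t + 1) := by linarith [mul_nonneg hν.le ht]
    exact div_le_div_of_nonneg_left hν.le two_pos h1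
  -- derivative of φ
  have hφd : ∀ t ∈ Set.Ici (0:ℝ), HasDerivAt φ (-(2 * (φ t)^2)) t := by
    intro t ht
    have hne : 2 * (ν * t + 1) ≠ 0 := ne_of_gt (by linarith [hu t ht])
    have hd : HasDerivAt (fun s : ℝ => 2 * (ν * s + 1)) (2 * ν) t := by
      simpa using (((hasDerivAt_id t).const_mul ν).add_const (1:ℝ)).const_mul (2:ℝ)
    have : HasDerivAt (fun s => ν / (2 * (ν * s + 1))) _ t := (hasDerivAt_const t ν).div hd hne
    convert this using 1
    simp only [hφdef]
    field_simp
    ring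
  set g : ℝ → ℝ := fun t => φ t * (w t)^2 with hgdef
  set g' : ℝ → ℝ := fun t => -(2 * (φ t)^2) * (w t)^2 + φ t * (2 * w t * w' t) with hg'def
  have hg : ∀ t ∈ Set.Ici (0:ℝ), HasDerivAt g (g' t) t := by
    intro t ht
    have : HasDerivAt (fun s => φ s * w s ^ 2) _ t := (hφd t ht).mul ((hderiv t ht).pow 2)
    convert this using 1
    simp only [hg'def]
    ring
  -- measurability
  have hwc : ContinuousOn w (Set.Ioi (0:ℝ)) := fun t ht =>
    ((hderiv t (Set.Ioi_subset_Ici_self ht)).continuousAt).continuousWithinAt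
  have hwm : AEStronglyMeasurable w (volume.restrict (Set.Ioi (0:ℝ))) :=
    hwc.aestronglyMeasurable measurableSet_Ioi
  have hw'm : AEStronglyMeasurable w' (volume.restrict (Set.Ioi (0:ℝ))) := by
    refine (measurable_deriv w).aestronglyMeasurable.congr ?_
    refine (ae_restrict_iff' measurableSet_Ioi).2 (Filter.Eventually.of_forall fun t ht => ?_)
    exact (hderiv t (Set.Ioi_subset_Ici_self ht)).deriv
  have hφcont : ContinuousOn φ (Set.Ici (0:ℝ)) := fun t ht =>
    ((hφd t ht).continuousAt).continuousWithinAt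
  have hφm : AEStronglyMeasurable φ (volume.restrict (Set.Ioi (0:ℝ))) :=
    (hφcont.mono Set.Ioi_subset_Ici_self).aestronglyMeasurable measurableSet_Ioi
  -- integrability
  have hB : IntegrableOn (fun t => (φ t)^2 * (w t)^2) (Set.Ioi (0:ℝ)) volume := by
    refine Integrable.mono' (hw2.const_mul ((ν/2)^2)) ?_ ?_
    · have : AEStronglyMeasurable (fun t => (φ t * φ t) * (w t)^2)
        (volume.restrict (Set.Ioi (0:ℝ))) := (hφm.mul hφm).mul hw2.aestronglyMeasurable
      simpa [pow_two] using this
    · refine (ae_restrict_iff' measurableSet_Ioi).2 (Filter.Eventually.of_forall fun t ht => ?_)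
      have h1 := hφpos t (Set.Ioi_subset_Ici_self ht)
      have h2 := hφle t (Set.Ioi_subset_Ici_self ht)
      have : |(φ t)^2 * (w t)^2| = (φ t)^2 * (w t)^2 := abs_of_nonneg (by positivity)
      rw [Real.norm_eq_abs, this]
      have h5 : (φ t)^2 ≤ (ν/2)^2 := by nlinarith
      exact mul_le_mul_of_nonneg_right h5 (sq_nonneg _)
  have hC : IntegrableOn (fun t => φ t * (2 * w t * w' t)) (Set.Ioi (0:ℝ)) volume := by
    refine Integrable.mono' ((hw2.add hw'2).const_mul (ν/2)) ?_ ?_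
    · exact hφm.mul (((hwm.const_mul 2).mul hw'm))
    · refine (ae_restrict_iff' measurableSet_Ioi).2 (Filter.Eventually.of_forall fun t ht => ?_)
      have h1 := hφpos t (Set.Ioi_subset_Ici_self ht)
      have h2 := hφle t (Set.Ioi_subset_Ici_self ht)
      have h3 : |2 * w t * w' t| ≤ (w t)^2 + (w' t)^2 := by
        rw [abs_le]; constructor <;> nlinarith [sq_nonneg (w t + w' t), sq_nonneg (w t - w' t)]
      rw [Real.norm_eq_abs, abs_mul, abs_of_nonneg h1.le]
      have h4 : 0 ≤ |2 * w t * w' t| := abs_nonneg _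
      simp only [Pi.add_apply]
      calc φ t * |2 * w t * w' t| ≤ (ν/2) * |2 * w t * w' t| :=
            mul_le_mul_of_nonneg_right h2 h4
        _ ≤ (ν/2) * ((w t)^2 + (w' t)^2) :=
            mul_le_mul_of_nonneg_left h3 (by positivity)
  have hg'int : IntegrableOn g' (Set.Ioi (0:ℝ)) volume := by
    have he : g' = fun t => (-2) * ((φ t)^2 * (w t)^2) + φ t * (2 * w t * w' t) := by
      funext t; simp [hg'def]; ring
    rw [he]
    exact (hB.const_mul (-2)).add hC
  -- FTC on [0, x]
  have hFTC : ∀ x : ℝ, 0 ≤ x → ∫ t in (0:ℝ)..x, g' t = g x - g 0 := by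
    intro x hx
    refine intervalIntegral.integral_eq_sub_of_hasDerivAt (fun t ht => ?_) ?_
    · rw [Set.uIcc_of_le hx] at ht; exact hg t ht.1
    · rw [intervalIntegrable_iff_integrableOn_Ioc_of_le hx]
      exact hg'int.mono_set Set.Ioc_subset_Ioi_self
  have htend : Filter.Tendsto g Filter.atTop (nhds (g 0 + ∫ t in Set.Ioi (0:ℝ), g' t)) := by
    have h1 := MeasureTheory.intervalIntegral_tendsto_integral_Ioi 0 hg'int Filter.tendsto_id
    have h2 : Filter.Tendsto (fun x => g 0 + ∫ t in (0:ℝ)..x, g' t) Filter.atTop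
        (nhds (g 0 + ∫ t in Set.Ioi (0:ℝ), g' t)) := tendsto_const_nhds.add h1
    refine h2.congr' ?_
    filter_upwards [Filter.eventually_ge_atTop (0:ℝ)] with x hx
    rw [hFTC x hx]; ring
  have hm : 0 ≤ g 0 + ∫ t in Set.Ioi (0:ℝ), g' t := by
    refine ge_of_tendsto htend ?_
    filter_upwards [Filter.eventually_ge_atTop (0:ℝ)] with x hx
    exact mul_nonneg (hφpos x hx).le (sq_nonneg _)
  -- split ∫ g'
  have h_split : ∫ t in Set.Ioi (0:ℝ), g' t =
      (-2) * (∫ t in Set.Ioi (0:ℝ), (φ t)^2 * (w t)^2)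
        + ∫ t in Set.Ioi (0:ℝ), φ t * (2 * w t * w' t) := by
    have he : g' = fun t => (-2) * ((φ t)^2 * (w t)^2) + φ t * (2 * w t * w' t) := by
      funext t; simp [hg'def]; ring
    rw [he, integral_add (hB.const_mul (-2)) hC, integral_const_mul]
  -- quadratic inequality
  have hq : 0 ≤ (∫ t in Set.Ioi (0:ℝ), (w' t)^2)
      - (∫ t in Set.Ioi (0:ℝ), φ t * (2 * w t * w' t))
      + ∫ t in Set.Ioi (0:ℝ), (φ t)^2 * (w t)^2 := by
    have h0 : 0 ≤ ∫ t in Set.Ioi (0:ℝ), (w' t - φ t * w t)^2 :=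
      setIntegral_nonneg measurableSet_Ioi fun t _ => sq_nonneg _
    have he : (fun t => (w' t - φ t * w t)^2)
        = fun t => (w' t)^2 - φ t * (2 * w t * w' t) + (φ t)^2 * (w t)^2 := by
      funext t; ring
    have hWC : Integrable (fun t => (w' t)^2 - φ t * (2 * w t * w' t))
        (volume.restrict (Set.Ioi (0:ℝ))) := hw'2.sub hC
    rwa [he, integral_add hWC hB, integral_sub hw'2 hC] at h0
  -- identify B with RHS integral
  have hBeq : (1/4) * ∫ t in Set.Ioi (0:ℝ), ν^2 / (ν * t + 1)^2 * (w t)^2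
      = ∫ t in Set.Ioi (0:ℝ), (φ t)^2 * (w t)^2 := by
    rw [← integral_const_mul]
    have he : (fun t => (1/4 : ℝ) * (ν^2 / (ν * t + 1)^2 * (w t)^2))
        = fun t => (φ t)^2 * (w t)^2 := by
      funext t
      rcases eq_or_ne (ν * t + 1) 0 with h | h
      · simp [hφdef, h]
      · simp only [hφdef]
        field_simp
        try ring
    rw [he]
  have hg0 : g 0 = ν / 2 * (w 0)^2 := by
    simp [hgdef, hφdef]
  rw [ge_iff_le, hBeq]
  linarith [hm, h_split, hq, hg0]
end

section
/- For every w ∈ H^1(0,N) and all positive reals α and N, one has -((α(1+αN))/N)·∫₀^N w(t)² dt ≤ -α·w(0)² + ∫₀^N w'(t)² dt. -/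
open MeasureTheory Real

theorem boundary_term_lower_bound
    (w w' : ℝ → ℝ) (α N : ℝ) (hα : 0 < α) (hN : 0 < N)
    (hderiv : ∀ t ∈ Set.Icc (0:ℝ) N, HasDerivAt w (w' t) t)
    (hw2 : IntervalIntegrable (fun t => (w t)^2) volume 0 N)
    (hw'2 : IntervalIntegrable (fun t => (w' t)^2) volume 0 N) :
    -((α * (1 + α * N)) / N) * ∫ t in (0:ℝ)..N, (w t)^2
      ≤ -α * (w 0)^2 + ∫ t in (0:ℝ)..N, (w' t)^2 := by
  have hcont : ContinuousOn w (Set.Icc 0 N) := fun t ht =>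
    (hderiv t ht).continuousAt.continuousWithinAt
  -- bound on |w|
  obtain ⟨C, hC⟩ := (isCompact_Icc (a := (0:ℝ)) (b := N)).exists_bound_of_continuousOn hcont
  have hC0 : 0 ≤ C := le_trans (norm_nonneg _) (hC 0 ⟨le_refl 0, hN.le⟩)
  -- measurability of w' on the interval
  have hw'meas : AEStronglyMeasurable w' (volume.restrict (Set.uIoc (0:ℝ) N)) := by
    apply (measurable_deriv w).aestronglyMeasurable.congr
    rw [Set.uIoc_of_le hN.le]
    refine (ae_restrict_iff' measurableSet_Ioc).2 (Filter.Eventually.of_forall fun t ht => ?_)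
    exact (hderiv t ⟨ht.1.le, ht.2⟩).deriv
  -- measurability of w on the interval
  have hwmeas : AEStronglyMeasurable w (volume.restrict (Set.uIoc (0:ℝ) N)) := by
    have h1 : AEStronglyMeasurable w (volume.restrict (Set.Icc (0:ℝ) N)) :=
      hcont.aestronglyMeasurable measurableSet_Icc
    refine h1.mono_measure (Measure.restrict_mono ?_ le_rfl)
    rw [Set.uIoc_of_le hN.le]; exact Set.Ioc_subset_Icc_self
  -- integrability of 2 w w'
  have hprod : IntervalIntegrable (fun t => 2 * w t * w' t) volume 0 N := by
    have hg : IntervalIntegrable (fun t => C * (1 + (w' t)^2)) volume 0 N :=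
      (intervalIntegrable_const.add hw'2).const_mul C
    refine hg.mono_fun' ((hwmeas.const_mul 2).mul hw'meas) ?_
    rw [Set.uIoc_of_le hN.le]
    refine (ae_restrict_iff' measurableSet_Ioc).2 (Filter.Eventually.of_forall fun t ht => ?_)
    have hwt : |w t| ≤ C := by
      have := hC t ⟨ht.1.le, ht.2⟩; simpa [Real.norm_eq_abs] using this
    have h1 : ‖2 * w t * w' t‖ = 2 * |w t| * |w' t| := by
      rw [Real.norm_eq_abs, abs_mul, abs_mul, abs_two]
    show ‖2 * w t * w' t‖ ≤ C * (1 + (w' t)^2)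
    rw [h1]
    nlinarith [abs_nonneg (w t), abs_nonneg (w' t), sq_abs (w' t), sq_nonneg (|w' t| - 1)]
  have habs : IntervalIntegrable (fun t => |2 * w t * w' t|) volume 0 N := hprod.abs
  set I := ∫ t in (0:ℝ)..N, (w t)^2 with hI
  set J := ∫ t in (0:ℝ)..N, (w' t)^2 with hJ
  set A := ∫ t in (0:ℝ)..N, |2 * w t * w' t| with hA
  have hInn : 0 ≤ I := intervalIntegral.integral_nonneg hN.le fun t _ => sq_nonneg _
  have hJnn : 0 ≤ J := intervalIntegral.integral_nonneg hN.le fun t _ => sq_nonneg _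
  -- FTC
  have hftc : ∀ t ∈ Set.Icc (0:ℝ) N,
      ∫ s in (0:ℝ)..t, 2 * w s * w' s = (w t)^2 - (w 0)^2 := by
    intro t ht
    apply intervalIntegral.integral_eq_sub_of_hasDerivAt
    · intro s hs
      have hs' : s ∈ Set.Icc 0 N := by
        rw [Set.uIcc_of_le ht.1] at hs
        exact ⟨hs.1, hs.2.trans ht.2⟩
      have : HasDerivAt (fun t => w t ^ 2) _ s := (hderiv s hs').pow 2
      simpa [pow_one, mul_comm, mul_assoc, mul_left_comm] using this
    · refine hprod.mono_set (Set.uIcc_subset_uIcc ?_ ?_)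
      · exact Set.left_mem_uIcc
      · rw [Set.uIcc_of_le hN.le]; exact ht
  -- pointwise bound
  have hpt : ∀ t ∈ Set.Icc (0:ℝ) N, (w 0)^2 ≤ (w t)^2 + A := by
    intro t ht
    have hft := hftc t ht
    have h1 : |∫ s in (0:ℝ)..t, 2 * w s * w' s| ≤ A := by
      calc |∫ s in (0:ℝ)..t, 2 * w s * w' s|
          ≤ ∫ s in (0:ℝ)..t, |2 * w s * w' s| :=
            intervalIntegral.abs_integral_le_integral_abs ht.1
        _ ≤ A := intervalIntegral.integral_mono_interval le_rfl ht.1 ht.2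
            (Filter.Eventually.of_forall fun s => abs_nonneg _) habs
    have h2 := (abs_le.1 h1).1
    linarith [hft]
  -- integrate pointwise bound
  have hNineq : N * (w 0)^2 ≤ I + N * A := by
    have h1 := intervalIntegral.integral_mono_on hN.le intervalIntegrable_const
      (hw2.add intervalIntegrable_const) hpt
    rw [intervalIntegral.integral_add hw2 intervalIntegrable_const] at h1
    simpa [mul_comm] using h1
  -- AM-GM bound on A
  have hA' : α * A ≤ α^2 * I + J := by
    have h1 : α * A = ∫ t in (0:ℝ)..N, α * |2 * w t * w' t| :=
      (intervalIntegral.integral_const_mul α _).symm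
    have h2 : (∫ t in (0:ℝ)..N, α * |2 * w t * w' t|)
        ≤ ∫ t in (0:ℝ)..N, (α^2 * (w t)^2 + (w' t)^2) := by
      refine intervalIntegral.integral_mono_on hN.le (habs.const_mul α)
        ((hw2.const_mul (α^2)).add hw'2) fun t _ => ?_
      have he : |2 * w t * w' t| = 2 * |w t| * |w' t| := by
        rw [abs_mul, abs_mul, abs_two]
      rw [he]
      nlinarith [sq_nonneg (α * |w t| - |w' t|), sq_abs (w t), sq_abs (w' t),
        abs_nonneg (w t), abs_nonneg (w' t)]
    have h3 : (∫ t in (0:ℝ)..N, (α^2 * (w t)^2 + (w' t)^2)) = α^2 * I + J := by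
      rw [intervalIntegral.integral_add (hw2.const_mul (α^2)) hw'2,
        intervalIntegral.integral_const_mul]
    linarith [h1 ▸ h2, h3 ▸ h2]
  -- combine
  have key : α * N * (w 0)^2 ≤ α * I + α^2 * N * I + N * J := by
    nlinarith [mul_le_mul_of_nonneg_left hNineq hα.le,
      mul_le_mul_of_nonneg_left hA' hN.le]
  have key2 : α * (w 0)^2 - J ≤ (α * (1 + α * N)) / N * I := by
    rw [div_mul_eq_mul_div, le_div_iff₀ hN]
    nlinarith [key]
  linarith
end

section
/- For every w ∈ H^1(0,∞) with ∫₀^∞ |w'|² dt < ∞ and ∫_L^∞ w² dt < ∞, and positive reals α, L, one has M_L(α)·∫₀^L w(t)² dt ≤ ∫₀^∞ w'(t)² dt + α²·∫_L^∞ w(t)² dt, where M_L(α) = π²α/(L(4αL+π²)). -/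
open Real Set

-- v x = 4x cos x + (8-π²) sin x ; v' = (12-π²)cos x - 4x sin x ; v'' = (π²-16) sin x - 4x cos x
private lemma hasDerivAt_BSv (x : ℝ) :
    HasDerivAt (fun y => 4*y*Real.cos y + (8 - π^2) * Real.sin y)
      ((12 - π^2) * Real.cos x - 4*x*Real.sin x) x := by
  have h1 : HasDerivAt (fun y => 4*y*Real.cos y) (4 * Real.cos x + 4*x*(-Real.sin x)) x := by
    simpa using ((hasDerivAt_id x).const_mul (4:ℝ)).fun_mul (Real.hasDerivAt_cos x)
  have h2 : HasDerivAt (fun y => (8 - π^2) * Real.sin y) ((8 - π^2) * Real.cos x) x :=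
    (Real.hasDerivAt_sin x).const_mul _
  exact (h1.fun_add h2).congr_deriv (by ring)

private lemma hasDerivAt_BSv' (x : ℝ) :
    HasDerivAt (fun y => (12 - π^2) * Real.cos y - 4*y*Real.sin y)
      ((π^2 - 16) * Real.sin x - 4*x*Real.cos x) x := by
  have h1 : HasDerivAt (fun y => (12 - π^2) * Real.cos y) ((12 - π^2) * (-Real.sin x)) x :=
    (Real.hasDerivAt_cos x).const_mul _
  have h2 : HasDerivAt (fun y => 4*y*Real.sin y) (4 * Real.sin x + 4*x*(Real.cos x)) x := by
    simpa using ((hasDerivAt_id x).const_mul (4:ℝ)).fun_mul (Real.hasDerivAt_sin x)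
  exact (h1.fun_sub h2).congr_deriv (by ring)

private lemma hasDerivAt_BSh (x : ℝ) :
    HasDerivAt (fun y => π^2 * y * Real.cos y - (π^2 - 4*y^2) * Real.sin y)
      (x * (4*x*Real.cos x + (8 - π^2) * Real.sin x)) x := by
  have h1 : HasDerivAt (fun y => π^2 * y * Real.cos y) (π^2 * Real.cos x + π^2*x*(-Real.sin x)) x := by
    simpa using ((hasDerivAt_id x).const_mul (π^2:ℝ)).fun_mul (Real.hasDerivAt_cos x)
  have h2 : HasDerivAt (fun y => (π^2 - 4*y^2) * Real.sin y)
      ((-(8*x)) * Real.sin x + (π^2 - 4*x^2) * Real.cos x) x := by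
    have : HasDerivAt (fun y : ℝ => π^2 - 4*y^2) (-(8*x)) x := by
      have := ((hasDerivAt_pow 2 x).const_mul (4:ℝ)).const_sub (π^2)
      exact this.congr_deriv (by norm_num; ring)
    exact this.fun_mul (Real.hasDerivAt_sin x)
  exact (h1.fun_sub h2).congr_deriv (by ring)

lemma becker_stark_aux : ∀ x ∈ Icc (0:ℝ) (π/2),
    0 ≤ π^2 * x * Real.cos x - (π^2 - 4*x^2) * Real.sin x := by
  set v : ℝ → ℝ := fun y => 4*y*Real.cos y + (8 - π^2) * Real.sin y with hv
  set h : ℝ → ℝ := fun y => π^2 * y * Real.cos y - (π^2 - 4*y^2) * Real.sin y with hh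
  have hπ : (0:ℝ) < π/2 := by positivity
  -- v is concave on [0, π/2]
  have hvd : ∀ x, deriv v x = (12 - π^2) * Real.cos x - 4*x*Real.sin x :=
    fun x => (hasDerivAt_BSv x).deriv
  have hvdf : deriv v = fun x => (12 - π^2) * Real.cos x - 4*x*Real.sin x := funext hvd
  have hconc : ConcaveOn ℝ (Icc 0 (π/2)) v := by
    apply concaveOn_of_deriv2_nonpos (convex_Icc _ _)
    · exact Continuous.continuousOn (by continuity)
    · exact fun x _ => ((hasDerivAt_BSv x).differentiableAt).differentiableWithinAt
    · rw [hvdf]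
      exact fun x _ => ((hasDerivAt_BSv' x).differentiableAt).differentiableWithinAt
    · intro x hx
      rw [interior_Icc] at hx
      have h2 : deriv^[2] v x = (π^2 - 16) * Real.sin x - 4*x*Real.cos x := by
        show deriv (deriv v) x = _
        rw [hvdf]; exact (hasDerivAt_BSv' x).deriv
      rw [h2]
      have hs : 0 ≤ Real.sin x := Real.sin_nonneg_of_nonneg_of_le_pi hx.1.le
        (hx.2.le.trans (by linarith [Real.pi_pos]))
      have hc : 0 ≤ Real.cos x := Real.cos_nonneg_of_mem_Icc ⟨by linarith [hx.1], hx.2.le⟩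
      have h16 : π^2 < 16 := by nlinarith [Real.pi_lt_d2, Real.pi_pos]
      nlinarith [mul_nonneg hs (by linarith : (0:ℝ) ≤ 16 - π^2),
        mul_nonneg (mul_nonneg hx.1.le hc) (by norm_num : (0:ℝ) ≤ 4)]
  -- the set where v ≥ 0
  set S : Set ℝ := {x | x ∈ Icc (0:ℝ) (π/2) ∧ 0 ≤ v x} with hS
  have hv0 : v 0 = 0 := by simp [hv]
  have h0S : (0:ℝ) ∈ S := ⟨⟨le_refl 0, hπ.le⟩, hv0.ge⟩
  have hSne : S.Nonempty := ⟨0, h0S⟩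
  have hSbdd : BddAbove S := ⟨π/2, fun x hx => hx.1.2⟩
  set ζ := sSup S with hζdef
  have hζmem : ζ ∈ S := by
    apply IsClosed.csSup_mem ?_ hSne hSbdd
    have hcv : Continuous v := by continuity
    have : S = Icc (0:ℝ) (π/2) ∩ v ⁻¹' (Ici 0) := by
      ext x; simp [hS, Set.mem_preimage, and_comm]
    rw [this]
    exact isClosed_Icc.inter (isClosed_Ici.preimage hcv)
  have hζ0 : 0 ≤ ζ := le_csSup hSbdd h0S
  have hζπ : ζ ≤ π/2 := csSup_le hSne (fun x hx => hx.1.2)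
  -- v ≥ 0 on [0, ζ]
  have hvpos : ∀ x ∈ Icc (0:ℝ) ζ, 0 ≤ v x := by
    intro x hx
    rcases eq_or_lt_of_le hζ0 with h0 | h0
    · have : x = 0 := le_antisymm (hx.2.trans h0.symm.le) hx.1
      rw [this, hv0]
    · have hb : 0 ≤ x / ζ := div_nonneg hx.1 hζ0
      have hb1 : x / ζ ≤ 1 := (div_le_one h0).2 hx.2
      have ha : 0 ≤ 1 - x / ζ := by linarith
      have hcomb := hconc.2 h0S.1 hζmem.1 ha hb (by ring)
      have hxeq : (1 - x / ζ) • (0:ℝ) + (x / ζ) • ζ = x := by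
        rw [smul_eq_mul, smul_eq_mul, mul_zero, zero_add, div_mul_cancel₀ x h0.ne']
      rw [hxeq] at hcomb
      have := hζmem.2
      calc (0:ℝ) ≤ (1 - x/ζ) * v 0 + (x/ζ) * v ζ := by
            rw [hv0]; positivity
        _ ≤ v x := by simpa [smul_eq_mul] using hcomb
  -- v ≤ 0 on (ζ, π/2]
  have hvneg : ∀ x ∈ Icc (0:ℝ) (π/2), ζ < x → v x ≤ 0 := by
    intro x hx hζx
    by_contra hcon
    push_neg at hcon
    exact absurd (le_csSup hSbdd ⟨hx, hcon.le⟩) (not_le.2 hζx)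
  -- h is monotone on [0, ζ], antitone on [ζ, π/2]
  have hhd : ∀ x, deriv h x = x * v x := fun x => (hasDerivAt_BSh x).deriv
  have hhc : Continuous h := by fun_prop
  have hmono : MonotoneOn h (Icc 0 ζ) := by
    apply monotoneOn_of_deriv_nonneg (convex_Icc _ _) hhc.continuousOn
    · exact fun x _ => ((hasDerivAt_BSh x).differentiableAt).differentiableWithinAt
    · intro x hx
      rw [interior_Icc] at hx
      rw [hhd]
      exact mul_nonneg hx.1.le (hvpos x ⟨hx.1.le, hx.2.le⟩)
  have hanti : AntitoneOn h (Icc ζ (π/2)) := by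
    apply antitoneOn_of_deriv_nonpos (convex_Icc _ _) hhc.continuousOn
    · exact fun x _ => ((hasDerivAt_BSh x).differentiableAt).differentiableWithinAt
    · intro x hx
      rw [interior_Icc] at hx
      rw [hhd]
      exact mul_nonpos_of_nonneg_of_nonpos (hζ0.trans hx.1.le)
        (hvneg x ⟨hζ0.trans hx.1.le, hx.2.le⟩ hx.1)
  have hh0 : h 0 = 0 := by simp [hh]
  have hhπ : h (π/2) = 0 := by
    simp [hh, Real.cos_pi_div_two, Real.sin_pi_div_two]
    ring
  intro x hx
  rcases le_or_gt x ζ with hle | hlt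
  · have := hmono ⟨le_refl 0, hζ0⟩ ⟨hx.1, hle⟩ hx.1
    rw [hh0] at this
    exact this
  · have := hanti ⟨hlt.le, hx.2⟩ ⟨hζπ, le_refl _⟩ hx.2
    rw [hhπ] at this
    exact this

lemma becker_stark_tan {x : ℝ} (h0 : 0 ≤ x) (h2 : x < π/2) :
    (π^2 - 4*x^2) * Real.tan x ≤ π^2 * x := by
  have hc : 0 < Real.cos x := Real.cos_pos_of_mem_Ioo ⟨by linarith [Real.pi_pos], h2⟩
  have := becker_stark_aux x ⟨h0, h2.le⟩
  rw [Real.tan_eq_sin_div_cos, ← mul_div_assoc, div_le_iff₀ hc]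
  nlinarith [this]

open MeasureTheory Real Set

set_option maxHeartbeats 1000000 in
theorem trace_inequality_with_tail
    (w w' : ℝ → ℝ) (α L : ℝ) (hα : 0 < α) (hL : 0 < L)
    (hderiv : ∀ t ∈ Set.Ici (0:ℝ), HasDerivAt w (w' t) t)
    (hw2 : IntegrableOn (fun t => (w t)^2) (Set.Ioi (0:ℝ)) volume)
    (hw'2 : IntegrableOn (fun t => (w' t)^2) (Set.Ioi (0:ℝ)) volume) :
    (π^2 * α / (L * (4 * α * L + π^2))) * ∫ t in (0:ℝ)..L, (w t)^2
      ≤ (∫ t in Set.Ioi (0:ℝ), (w' t)^2) + α^2 * ∫ t in Set.Ioi L, (w t)^2 := by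
  have hπ : (0:ℝ) < π := Real.pi_pos
  set M : ℝ := π^2 * α / (L * (4 * α * L + π^2)) with hMdef
  have hden : (0:ℝ) < L * (4 * α * L + π^2) := by positivity
  have hM : 0 < M := by positivity
  set μ : ℝ := Real.sqrt M with hμdef
  have hμ : 0 < μ := Real.sqrt_pos.2 hM
  have hμ2 : μ^2 = M := Real.sq_sqrt hM.le
  have hμL : μ * L < π / 2 := by
    have h1 : M * L^2 < (π/2)^2 := by
      rw [hMdef, div_mul_eq_mul_div, div_lt_iff₀ hden]
      have : (π/2)^2 * (L * (4*α*L + π^2)) - π^2*α*L^2 = π^4*L/4 := by ring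
      linarith [this, show (0:ℝ) < π^4*L/4 by positivity]
    have h2 : μ * L = Real.sqrt (M * L^2) := by
      rw [Real.sqrt_mul hM.le, Real.sqrt_sq hL.le]
    rw [h2, show π/2 = Real.sqrt ((π/2)^2) by rw [Real.sqrt_sq (by positivity)]]
    exact Real.sqrt_lt_sqrt (by positivity) h1
  have hμL0 : 0 ≤ μ * L := by positivity
  -- Step A : μ tan(μ L) ≤ α
  have hstepA : μ * Real.tan (μ*L) ≤ α := by
    have hbs := becker_stark_tan hμL0 hμL
    have hA1 := mul_le_mul_of_nonneg_left hbs hμ.le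
    have hA2 : μ^2 * (L * (4*α*L + π^2)) = π^2 * α := by
      rw [hμ2, hMdef]; field_simp
    have hc : 0 < π^2 - 4*(μ*L)^2 := by nlinarith [hμL, hμL0]
    nlinarith [hA1, hA2, hc, hμ.le]
  -- cosine positivity on [0, L]
  have hcos : ∀ t ∈ Icc (0:ℝ) L, 0 < Real.cos (μ*t) := by
    intro t ht
    apply Real.cos_pos_of_mem_Ioo
    constructor
    · nlinarith [ht.1, hμ.le]
    · rcases eq_or_lt_of_le ht.1 with h | h
      · simp [← h]; positivity
      · calc μ * t ≤ μ * L := by nlinarith [ht.2, hμ]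
          _ < π/2 := hμL
  -- measurability of w and w'
  have hwc : ∀ t, 0 ≤ t → ContinuousAt w t := fun t ht => (hderiv t ht).continuousAt
  have hw'eq : ∀ t ∈ Ioi (0:ℝ), deriv w t = w' t := fun t ht => (hderiv t (mem_Ici.2 (le_of_lt ht))).deriv
  have hw'm : ∀ s : Set ℝ, MeasurableSet s → s ⊆ Ioi (0:ℝ) →
      AEStronglyMeasurable w' (volume.restrict s) := by
    intro s hs hsub
    refine (measurable_deriv w).aestronglyMeasurable.congr ?_
    rw [Filter.EventuallyEq, ae_restrict_iff' hs]
    exact ae_of_all _ fun t ht => hw'eq t (hsub ht)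
  have hwm : ∀ s : Set ℝ, MeasurableSet s → s ⊆ Ici (0:ℝ) →
      AEStronglyMeasurable w (volume.restrict s) := by
    intro s hs hsub
    exact ContinuousOn.aestronglyMeasurable
      (fun t ht => (hwc t (hsub ht)).continuousWithinAt) hs
  -- integrability on (0, L]
  have hIoc : Ioc (0:ℝ) L ⊆ Ioi 0 := Ioc_subset_Ioi_self
  have hw'2I : IntegrableOn (fun t => (w' t)^2) (Ioc 0 L) volume := hw'2.mono_set hIoc
  have hw2I : IntegrableOn (fun t => (w t)^2) (Ioc 0 L) volume := hw2.mono_set hIoc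
  have honeI : IntegrableOn (fun _ : ℝ => (1:ℝ)) (Ioc 0 L) volume :=
    integrableOn_const measure_Ioc_lt_top.ne
  -- derivative of t ↦ tan (μ t)
  have htan : ∀ t ∈ Icc (0:ℝ) L, HasDerivAt (fun s => Real.tan (μ*s)) (μ / Real.cos (μ*t)^2) t := by
    intro t ht
    have h1 : HasDerivAt (fun s : ℝ => μ*s) μ t := by
      simpa using (hasDerivAt_id t).const_mul μ
    have h2 := (Real.hasDerivAt_tan (hcos t ht).ne').comp t h1
    exact h2.congr_deriv (by ring)
  -- derivative of the auxiliary function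
  have hH : ∀ t ∈ Icc (0:ℝ) L, HasDerivAt (fun s => -(μ * Real.tan (μ*s)) * (w s)^2)
      (-(μ^2 / Real.cos (μ*t)^2) * (w t)^2 + -(μ * Real.tan (μ*t)) * (2 * w t * w' t)) t := by
    intro t ht
    have hw2d : HasDerivAt (fun s => (w s)^2) (2 * w t * w' t) t := by
      have := (hderiv t ht.1).fun_pow 2
      exact this.congr_deriv (by norm_num)
    have hhd : HasDerivAt (fun s => -(μ * Real.tan (μ*s))) (-(μ^2 / Real.cos (μ*t)^2)) t := by
      have := ((htan t ht).const_mul μ).fun_neg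
      exact this.congr_deriv (by ring)
    exact hhd.fun_mul hw2d
  -- integrability of the derivative
  have hcontan : ContinuousOn (fun t => -(μ * Real.tan (μ*t)) * (2 * w t)) (Icc 0 L) := by
    apply ContinuousOn.mul
    · intro t ht
      exact (((htan t ht).const_mul μ).neg.continuousAt).continuousWithinAt
    · exact fun t ht => continuousWithinAt_const.mul ((hwc t ht.1).continuousWithinAt)
  obtain ⟨C, hC⟩ := isCompact_Icc.exists_bound_of_continuousOn hcontan
  have hC0 : 0 ≤ C := le_trans (norm_nonneg _) (hC 0 ⟨le_refl 0, hL.le⟩)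
  -- the two pieces of the derivative are integrable
  have piece1 : IntegrableOn (fun t => -(μ^2 / Real.cos (μ*t)^2) * (w t)^2) (Ioc 0 L) volume := by
    apply IntegrableOn.mono_set ?_ Ioc_subset_Icc_self
    apply ContinuousOn.integrableOn_Icc
    apply ContinuousOn.mul
    · intro t ht
      apply ContinuousWithinAt.neg
      apply ContinuousWithinAt.div continuousWithinAt_const
      · exact ((Real.continuous_cos.comp (continuous_const.mul continuous_id)).pow 2).continuousWithinAt
      · exact pow_ne_zero 2 (hcos t ht).ne'
    · exact fun t ht => ((hwc t ht.1).continuousWithinAt).pow 2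
  have piece2' : IntegrableOn (fun t => (-(μ * Real.tan (μ*t)) * (2 * w t)) * w' t) (Ioc 0 L) volume := by
    apply Integrable.mono' (g := fun t => C * (1 + (w' t)^2))
    · exact (honeI.add hw'2I).const_mul C
    · apply AEStronglyMeasurable.mul ?_ (hw'm _ measurableSet_Ioc hIoc)
      exact (hcontan.aestronglyMeasurable measurableSet_Icc).mono_measure
        (Measure.restrict_mono Ioc_subset_Icc_self le_rfl)
    · rw [ae_restrict_iff' measurableSet_Ioc]
      refine ae_of_all _ fun t ht => ?_
      have h1 := hC t (Ioc_subset_Icc_self ht)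
      rw [Real.norm_eq_abs] at h1 ⊢
      rw [abs_mul]
      have h3 : |w' t| ≤ 1 + (w' t)^2 := by nlinarith [sq_nonneg (|w' t| - 1), sq_abs (w' t)]
      nlinarith [abs_nonneg (-(μ * Real.tan (μ*t)) * (2 * w t)), abs_nonneg (w' t)]
  have piece2 : IntegrableOn (fun t => -(μ * Real.tan (μ*t)) * (2 * w t * w' t)) (Ioc 0 L) volume :=
    piece2'.congr_fun (fun t _ => by ring) measurableSet_Ioc
  have hII : IntervalIntegrable (fun t => -(μ^2 / Real.cos (μ*t)^2) * (w t)^2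
      + -(μ * Real.tan (μ*t)) * (2 * w t * w' t)) volume 0 L := by
    rw [intervalIntegrable_iff, uIoc_of_le hL.le]
    exact piece1.add piece2
  -- fundamental theorem of calculus
  have hFTC : ∫ t in (0:ℝ)..L, (-(μ^2 / Real.cos (μ*t)^2) * (w t)^2
        + -(μ * Real.tan (μ*t)) * (2 * w t * w' t))
      = -(μ * Real.tan (μ*L)) * (w L)^2 := by
    have := intervalIntegral.integral_eq_sub_of_hasDerivAt
      (f := fun s => -(μ * Real.tan (μ*s)) * (w s)^2)
      (fun t ht => hH t (by rwa [uIcc_of_le hL.le] at ht)) hII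
    rw [this]
    simp
  -- pointwise expansion of the square
  have hexp : ∀ t ∈ uIcc (0:ℝ) L, (w' t - -(μ * Real.tan (μ*t)) * w t)^2
      = (w' t)^2 - (-(μ^2 / Real.cos (μ*t)^2) * (w t)^2
        + -(μ * Real.tan (μ*t)) * (2 * w t * w' t)) - μ^2 * (w t)^2 := by
    intro t ht
    rw [uIcc_of_le hL.le] at ht
    have hc := hcos t ht
    have hsc := Real.sin_sq_add_cos_sq (μ*t)
    rw [Real.tan_eq_sin_div_cos]
    field_simp
    linear_combination (μ^2 * (w t)^2) * hsc
  have hw'2II : IntervalIntegrable (fun t => (w' t)^2) volume 0 L := by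
    rw [intervalIntegrable_iff, uIoc_of_le hL.le]; exact hw'2I
  have hw2II : IntervalIntegrable (fun t => (w t)^2) volume 0 L := by
    rw [intervalIntegrable_iff, uIoc_of_le hL.le]; exact hw2I
  have hnn : 0 ≤ ∫ t in (0:ℝ)..L, (w' t - -(μ * Real.tan (μ*t)) * w t)^2 :=
    intervalIntegral.integral_nonneg hL.le (fun t _ => sq_nonneg _)
  have hsplit2 : ∫ t in (0:ℝ)..L, (w' t - -(μ * Real.tan (μ*t)) * w t)^2
      = (∫ t in (0:ℝ)..L, (w' t)^2)
        - (∫ t in (0:ℝ)..L, (-(μ^2 / Real.cos (μ*t)^2) * (w t)^2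
            + -(μ * Real.tan (μ*t)) * (2 * w t * w' t)))
        - μ^2 * ∫ t in (0:ℝ)..L, (w t)^2 := by
    rw [intervalIntegral.integral_congr hexp,
      intervalIntegral.integral_sub (hw'2II.sub hII) (hw2II.const_mul (μ^2)),
      intervalIntegral.integral_sub hw'2II hII, intervalIntegral.integral_const_mul]
  have hB : μ^2 * ∫ t in (0:ℝ)..L, (w t)^2
      ≤ (∫ t in (0:ℝ)..L, (w' t)^2) + μ * Real.tan (μ*L) * (w L)^2 := by
    rw [hsplit2, hFTC] at hnn
    nlinarith [hnn]
  -- Step C : w(L)² ≤ ∫_{Ioi L} |2 w w'|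
  have hIoiL : Ioi L ⊆ Ioi (0:ℝ) := Ioi_subset_Ioi hL.le
  have hw2L : IntegrableOn (fun t => (w t)^2) (Ioi L) volume := hw2.mono_set hIoiL
  have hw'2L : IntegrableOn (fun t => (w' t)^2) (Ioi L) volume := hw'2.mono_set hIoiL
  have hJ0 : 0 ≤ ∫ t in Ioi L, (w t)^2 :=
    setIntegral_nonneg measurableSet_Ioi (fun t _ => sq_nonneg _)
  have hJ'0 : 0 ≤ ∫ t in Ioi L, (w' t)^2 :=
    setIntegral_nonneg measurableSet_Ioi (fun t _ => sq_nonneg _)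
  have hgmeas : AEStronglyMeasurable (fun t => 2 * w t * w' t) (volume.restrict (Ioi L)) := by
    have h1 : AEStronglyMeasurable (fun t => 2 * w t) (volume.restrict (Ioi L)) :=
      (hwm _ measurableSet_Ioi (fun x hx => le_of_lt (lt_of_le_of_lt hL.le hx))).const_mul 2
    exact h1.mul (hw'm _ measurableSet_Ioi hIoiL)
  have hgbound : ∀ t, |2 * w t * w' t| ≤ α * (w t)^2 + (1/α) * (w' t)^2 := by
    intro t
    have h1 : α * (1/α) = 1 := by field_simp
    rw [abs_mul, abs_mul, abs_two]
    have h2 : α * (2 * |w t| * |w' t|) ≤ α * (α * (w t)^2 + 1/α * (w' t)^2) := by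
      have e1 : α * (α * (w t)^2 + 1/α * (w' t)^2) = α^2*(w t)^2 + (w' t)^2 := by
        field_simp
      rw [e1]
      nlinarith [sq_nonneg (α*|w t| - |w' t|), sq_abs (w t), sq_abs (w' t)]
    exact le_of_mul_le_mul_left h2 hα
  have hgint : IntegrableOn (fun t => 2 * w t * w' t) (Ioi L) volume :=
    Integrable.mono' ((hw2L.const_mul α).add (hw'2L.const_mul (1/α))) hgmeas
      (ae_of_all _ (fun t => by rw [Real.norm_eq_abs]; exact hgbound t))
  have habs : IntegrableOn (fun t => |2 * w t * w' t|) (Ioi L) volume := hgint.abs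
  set E := ∫ t in Ioi L, |2 * w t * w' t| with hEdef
  have hE : E ≤ α * (∫ t in Ioi L, (w t)^2) + (1/α) * (∫ t in Ioi L, (w' t)^2) := by
    rw [hEdef, ← integral_const_mul, ← integral_const_mul,
      ← integral_add (hw2L.const_mul α) (hw'2L.const_mul (1/α))]
    exact setIntegral_mono_on habs
      ((hw2L.const_mul α).add (hw'2L.const_mul (1/α))) measurableSet_Ioi
      (fun t _ => hgbound t)
  have hFTC2 : ∀ T, L ≤ T → (w L)^2 ≤ (w T)^2 + E := by
    intro T hT
    have hint : IntervalIntegrable (fun t => 2 * w t * w' t) volume L T := by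
      rw [intervalIntegrable_iff, uIoc_of_le hT]
      exact hgint.mono_set Ioc_subset_Ioi_self
    have hftc := intervalIntegral.integral_eq_sub_of_hasDerivAt
      (f := fun s => (w s)^2) (f' := fun t => 2 * w t * w' t) (fun t ht => by
        rw [uIcc_of_le hT] at ht
        have := (hderiv t (le_trans hL.le ht.1)).fun_pow 2
        exact this.congr_deriv (by norm_num)) hint
    have h1 : |∫ t in L..T, 2 * w t * w' t| ≤ E := by
      calc |∫ t in L..T, 2 * w t * w' t| ≤ ∫ t in L..T, |2 * w t * w' t| :=
            intervalIntegral.abs_integral_le_integral_abs hT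
        _ = ∫ t in Ioc L T, |2 * w t * w' t| := intervalIntegral.integral_of_le hT
        _ ≤ E := setIntegral_mono_set habs (ae_of_all _ fun t => abs_nonneg _)
            (HasSubset.Subset.eventuallyLE Ioc_subset_Ioi_self)
    have h2 := (abs_le.1 h1).1
    linarith [hftc, h2]
  have hstepC : (w L)^2 ≤ E := by
    apply le_of_forall_pos_le_add
    intro ε hε
    set J := ∫ t in Ioi L, (w t)^2 with hJdef
    set R := J/ε + 1 with hRdef
    have hR0 : 0 < R := by positivity
    have hconstII : IntervalIntegrable (fun _ : ℝ => (w L)^2) volume L (L+R) :=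
      intervalIntegrable_const
    have hrhsII : IntervalIntegrable (fun T => (w T)^2 + E) volume L (L+R) := by
      rw [intervalIntegrable_iff, uIoc_of_le (by linarith)]
      exact (hw2L.mono_set Ioc_subset_Ioi_self).add
        (integrableOn_const measure_Ioc_lt_top.ne)
    have hmono := intervalIntegral.integral_mono_on (by linarith : L ≤ L + R)
      hconstII hrhsII (fun T hT => hFTC2 T hT.1)
    rw [intervalIntegral.integral_const] at hmono
    have hsum : ∫ T in L..(L+R), ((w T)^2 + E)
        = (∫ T in Ioc L (L+R), (w T)^2) + R * E := by
      rw [intervalIntegral.integral_add (by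
          rw [intervalIntegrable_iff, uIoc_of_le (by linarith)]
          exact hw2L.mono_set Ioc_subset_Ioi_self) intervalIntegrable_const,
        intervalIntegral.integral_const, intervalIntegral.integral_of_le (by linarith : L ≤ L + R)]
      simp
    have htail : ∫ T in Ioc L (L+R), (w T)^2 ≤ J := by
      rw [hJdef]
      exact setIntegral_mono_set hw2L (ae_of_all _ fun t => sq_nonneg _)
        (HasSubset.Subset.eventuallyLE Ioc_subset_Ioi_self)
    have hR1 : R * (w L)^2 ≤ J + R * E := by
      have : (L + R - L) • (w L)^2 = R * (w L)^2 := by simp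
      rw [this] at hmono
      rw [hsum] at hmono
      linarith
    have hJR : J / R ≤ ε := by
      rw [div_le_iff₀ hR0, hRdef]
      have : ε * (J/ε + 1) = J + ε := by field_simp
      rw [this]
      linarith
    calc (w L)^2 = R * (w L)^2 / R := by field_simp
      _ ≤ (J + R * E) / R := by gcongr
      _ = J / R + E := by field_simp
      _ ≤ E + ε := by linarith
  -- final assembly
  have hsplitIoi : ∫ t in Ioi (0:ℝ), (w' t)^2
      = (∫ t in Ioc 0 L, (w' t)^2) + ∫ t in Ioi L, (w' t)^2 := by
    rw [← setIntegral_union (Ioc_disjoint_Ioi le_rfl) measurableSet_Ioi hw'2I hw'2L,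
      Ioc_union_Ioi_eq_Ioi hL.le]
  have hA0L : ∫ t in (0:ℝ)..L, (w' t)^2 = ∫ t in Ioc 0 L, (w' t)^2 :=
    intervalIntegral.integral_of_le hL.le
  have hwL0 : 0 ≤ (w L)^2 := sq_nonneg _
  have hfin1 : μ * Real.tan (μ*L) * (w L)^2 ≤ α * (w L)^2 :=
    mul_le_mul_of_nonneg_right hstepA hwL0
  have hfin2 : α * E ≤ α^2 * (∫ t in Ioi L, (w t)^2) + (∫ t in Ioi L, (w' t)^2) := by
    have h1 := mul_le_mul_of_nonneg_left hE hα.le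
    have e1 : α * (α * (∫ t in Ioi L, (w t)^2) + 1/α * (∫ t in Ioi L, (w' t)^2))
        = α^2 * (∫ t in Ioi L, (w t)^2) + (∫ t in Ioi L, (w' t)^2) := by
      field_simp
    linarith [h1, e1.ge, e1.le]
  have hfin3 : α * (w L)^2 ≤ α * E := mul_le_mul_of_nonneg_left hstepC hα.le
  rw [← hμ2]
  linarith [hB, hfin1, hfin2, hfin3, hsplitIoi, hA0L]
end

section
/- Let S be a smooth closed curve in the upper half-plane {x₂ > 0}, contained in {|x₁| < L, h < x₂ < H} with 0 < h ≤ H, and with outward unit normal n = (n₁,n₂). Fix ε ∈ (0,h]. Assume Condition 1: x₁n₁(x) ≤ 0 for all x ∈ S, and Condition 2: x₁(x₁² − (x₂−ε)²)n₁(x) + 2x₁²(x₂−ε)n₂(x) ≥ 0 for all x ∈ S. Then for every x ∈ S with x₂ > h (equivalently, at any point where x₂ ≥ ε and x ≠ 0) one has −x₁n₁(x) ≤ (H/ε)·W(x)·n(x), where W(x) = (x₁(x₁²−x₂²)/(x₁²+x₂²), 2x₁²x₂/(x₁²+x₂²)). -/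
/-- Lemma 4.3 of the paper (pointwise algebraic statement). `n = (n₁, n₂)` is the outward
unit normal at a point `x = (x₁, x₂)` of the submerged contour `S`, `W` is Maz'ya's field. -/
theorem mazya_field_lower_bound
    (x₁ x₂ n₁ n₂ ε h H : ℝ)
    (hh : 0 < h) (hhH : h ≤ H)
    (hx₂ : h < x₂) (hx₂H : x₂ ≤ H)
    (hε : 0 < ε) (hεh : ε ≤ h)
    (hn : n₁^2 + n₂^2 = 1)
    (hcond1 : x₁ * n₁ ≤ 0)
    (hcond2 : x₁ * (x₁^2 - (x₂ - ε)^2) * n₁ + 2 * x₁^2 * (x₂ - ε) * n₂ ≥ 0) :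
    -(x₁ * n₁) ≤ (H / ε) *
      ((x₁ * (x₁^2 - x₂^2) / (x₁^2 + x₂^2)) * n₁ + (2 * x₁^2 * x₂ / (x₁^2 + x₂^2)) * n₂) := by
  have hx2pos : 0 < x₂ := lt_of_le_of_lt hh.le hx₂
  have ht : 0 < x₂ - ε := by linarith
  have hr : 0 < x₁ ^ 2 + x₂ ^ 2 := by positivity
  have hm : 0 ≤ -(x₁ * n₁) := by linarith
  have hHpos : 0 < H := by linarith
  -- key polynomial inequality
  have key : ε * ((x₁ ^ 2 + x₂ ^ 2) * (-(x₁ * n₁))) ≤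
      H * (x₁ * (x₁ ^ 2 - x₂ ^ 2) * n₁ + 2 * x₁ ^ 2 * x₂ * n₂) := by
    have hmul : (x₂ - ε) * (ε * ((x₁ ^ 2 + x₂ ^ 2) * (-(x₁ * n₁)))) ≤
        (x₂ - ε) * (H * (x₁ * (x₁ ^ 2 - x₂ ^ 2) * n₁ + 2 * x₁ ^ 2 * x₂ * n₂)) := by
      nlinarith [mul_nonneg (mul_nonneg hHpos.le hx2pos.le) hcond2,
        mul_nonneg (mul_nonneg (mul_nonneg hm (by linarith : (0:ℝ) ≤ H - x₂)) hx2pos.le) ht.le,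
        mul_nonneg (mul_nonneg hm (by linarith : (0:ℝ) ≤ H - (x₂ - ε))) (sq_nonneg x₁),
        hε.le]
    exact le_of_mul_le_mul_left hmul ht
  have heq : (x₁ * (x₁ ^ 2 - x₂ ^ 2) / (x₁ ^ 2 + x₂ ^ 2)) * n₁ +
      (2 * x₁ ^ 2 * x₂ / (x₁ ^ 2 + x₂ ^ 2)) * n₂ =
      (x₁ * (x₁ ^ 2 - x₂ ^ 2) * n₁ + 2 * x₁ ^ 2 * x₂ * n₂) / (x₁ ^ 2 + x₂ ^ 2) := by
    field_simp
  rw [heq, div_mul_div_comm, le_div_iff₀ (by positivity)]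
  nlinarith [key]
end

section
/- Let ν > 0 and suppose Θ : [0,∞) → ℝ is in H¹(0,∞) with ∫₀^∞ Θ(t)·e^{−νt} dt = 0. Then (1/2)·∫₀^∞ Θ'(t)² dt ≥ ν·Θ(0)². -/
open MeasureTheory Real Filter Set

lemma tendsto_exp_neg_mul {b : ℝ} (hb : 0 < b) :
    Tendsto (fun t : ℝ => Real.exp (-(b * t))) atTop (nhds 0) := by
  have h1 : Tendsto (fun t : ℝ => -(b * t)) atTop atBot := by
    exact tendsto_neg_atTop_atBot.comp ((tendsto_id (α := ℝ)).const_mul_atTop hb)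
  exact Real.tendsto_exp_atBot.comp h1

lemma integral_exp_neg_mul_Ioi_zero {b : ℝ} (hb : 0 < b) :
    ∫ t in Set.Ioi (0:ℝ), Real.exp (-(b * t)) = 1 / b := by
  have h : ∀ x ∈ Set.Ici (0:ℝ),
      HasDerivAt (fun t => -Real.exp (-(b * t)) / b) (Real.exp (-(b * x))) x := by
    intro x _
    have := (ProbabilityTheory.hasDerivAt_neg_exp_mul_exp (r := b) (x := x)).div_const b
    exact this.congr_deriv (by field_simp)
  have htend : Tendsto (fun t => -Real.exp (-(b * t)) / b) atTop (nhds 0) := by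
    simpa using ((tendsto_exp_neg_mul hb).neg.div_const b)
  have hi : IntegrableOn (fun t => Real.exp (-(b * t))) (Set.Ioi (0:ℝ)) := by
    simpa [neg_mul] using exp_neg_integrableOn_Ioi 0 hb
  have := integral_Ioi_of_hasDerivAt_of_tendsto' h hi htend
  simp at this
  rw [this]; ring

/-- F. John's inequality: if `Θ ∈ H¹(0,∞)` is orthogonal to `e^{-νt}` in `L²(0,∞)`,
then `(1/2)‖Θ'‖² ≥ ν Θ(0)²`. -/
theorem john_inequality
    (Θ Θ' : ℝ → ℝ) (ν : ℝ) (hν : 0 < ν)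
    (hderiv : ∀ t ∈ Set.Ici (0:ℝ), HasDerivAt Θ (Θ' t) t)
    (hΘ2 : IntegrableOn (fun t => (Θ t)^2) (Set.Ioi (0:ℝ)) volume)
    (hΘ'2 : IntegrableOn (fun t => (Θ' t)^2) (Set.Ioi (0:ℝ)) volume)
    (hint : IntegrableOn (fun t => Θ t * Real.exp (-ν * t)) (Set.Ioi (0:ℝ)) volume)
    (horth : ∫ t in Set.Ioi (0:ℝ), Θ t * Real.exp (-ν * t) = 0) :
    (1/2) * ∫ t in Set.Ioi (0:ℝ), (Θ' t)^2 ≥ ν * (Θ 0)^2 := by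
  set A := ∫ t in Set.Ioi (0:ℝ), (Θ' t)^2 with hAdef
  have hA : 0 ≤ A := setIntegral_nonneg measurableSet_Ioi (fun t _ => sq_nonneg _)
  -- continuity / measurability
  have hΘcont : ContinuousOn Θ (Set.Ici 0) :=
    fun t ht => (hderiv t ht).continuousAt.continuousWithinAt
  have hΘmeas : AEStronglyMeasurable Θ (volume.restrict (Set.Ioi 0)) :=
    (hΘcont.mono Ioi_subset_Ici_self).aestronglyMeasurable measurableSet_Ioi
  have hΘ'meas : AEStronglyMeasurable Θ' (volume.restrict (Set.Ioi 0)) := by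
    refine (measurable_deriv Θ).aestronglyMeasurable.congr ?_
    filter_upwards [ae_restrict_mem measurableSet_Ioi] with t ht
    exact ((hderiv t (Set.Ioi_subset_Ici_self ht)).deriv)
  -- integrability of 2ΘΘ'
  have hmul : IntegrableOn (fun t => 2 * Θ t * Θ' t) (Set.Ioi (0:ℝ)) volume := by
    refine (hΘ2.add hΘ'2).mono' ((hΘmeas.const_mul 2).mul hΘ'meas) ?_
    filter_upwards with t
    simp only [Real.norm_eq_abs, Pi.add_apply]
    rw [abs_le]
    constructor <;> nlinarith [sq_nonneg (Θ t - Θ' t), sq_nonneg (Θ t + Θ' t)]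
  -- FTC on [0,x]
  have hFTC : ∀ x : ℝ, 0 ≤ x → ∫ t in (0:ℝ)..x, 2 * Θ t * Θ' t = (Θ x)^2 - (Θ 0)^2 := by
    intro x hx
    have hd : ∀ t ∈ Set.uIcc (0:ℝ) x, HasDerivAt (fun s => (Θ s)^2) (2 * Θ t * Θ' t) t := by
      intro t ht
      rw [Set.uIcc_of_le hx] at ht
      have := (hderiv t ht.1).pow 2
      exact this.congr_deriv (by norm_num)
    have hii : IntervalIntegrable (fun t => 2 * Θ t * Θ' t) volume 0 x := by
      rw [intervalIntegrable_iff_integrableOn_Ioc_of_le hx]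
      exact hmul.mono_set Set.Ioc_subset_Ioi_self
    exact intervalIntegral.integral_eq_sub_of_hasDerivAt hd hii
  -- Θ² tends to L
  set L := (Θ 0)^2 + ∫ t in Set.Ioi (0:ℝ), 2 * Θ t * Θ' t with hLdef
  have htendF : Tendsto (fun x => (Θ x)^2) atTop (nhds L) := by
    have h1 := intervalIntegral_tendsto_integral_Ioi 0 hmul tendsto_id
    have h2 : Tendsto (fun x => (Θ 0)^2 + ∫ t in (0:ℝ)..(id x), 2 * Θ t * Θ' t)
        atTop (nhds L) := (tendsto_const_nhds.add h1)
    refine h2.congr' ?_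
    filter_upwards [eventually_ge_atTop (0:ℝ)] with x hx
    rw [id, hFTC x hx]; ring
  have hL0 : L = 0 := by
    have hLnonneg : 0 ≤ L := ge_of_tendsto htendF (by filter_upwards with x using sq_nonneg _)
    rcases lt_or_eq_of_le hLnonneg with hL | hL
    · exfalso
      have hev : ∀ᶠ x in atTop, L/2 ≤ (Θ x)^2 := by
        exact htendF.eventually (eventually_ge_nhds (show L/2 < L by linarith))
      rcases (eventually_atTop.1 hev) with ⟨B, hB⟩
      set C := max B 1 with hC
      have hconst : Integrable (fun _ : ℝ => L/2) (volume.restrict (Set.Ioi C)) := by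
        refine ((hΘ2.mono_set (Set.Ioi_subset_Ioi ?_))).mono' aestronglyMeasurable_const ?_
        · positivity
        · filter_upwards [ae_restrict_mem measurableSet_Ioi] with t ht
          have := hB t (le_trans (le_max_left B 1) (le_of_lt ht))
          rw [Real.norm_eq_abs, abs_of_nonneg (by linarith)]
          exact this
      rw [integrable_const_iff] at hconst
      rcases hconst with h | h
      · linarith
      · have h := h.measure_univ_lt_top
        rw [Measure.restrict_apply_univ, Real.volume_Ioi] at h
        exact (lt_irrefl _ h).elim
    · exact hL.symm
  rw [hL0] at htendF
  -- Θ → 0 and Θ e^{-νt} → 0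
  have habs : Tendsto (fun x => |Θ x|) atTop (nhds 0) := by
    have h := (Real.continuous_sqrt.tendsto 0).comp htendF
    rw [Real.sqrt_zero] at h
    exact h.congr (fun x => Real.sqrt_sq_eq_abs (Θ x))
  have htend0 : Tendsto Θ atTop (nhds 0) :=
    squeeze_zero_norm (fun x => le_of_eq (Real.norm_eq_abs _)) habs
  have hgtend : Tendsto (fun t => Θ t * Real.exp (-ν * t)) atTop (nhds 0) := by
    have := htend0.mul (tendsto_exp_neg_mul hν)
    simpa [neg_mul] using this
  -- integrability of Θ' e^{-νt}
  have hexp2ν : IntegrableOn (fun t => Real.exp (-(2*ν) * t)) (Set.Ioi (0:ℝ)) volume :=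
    exp_neg_integrableOn_Ioi 0 (by positivity)
  have hexpcont : Continuous (fun t : ℝ => Real.exp (-ν * t)) :=
    Real.continuous_exp.comp (continuous_const.mul continuous_id)
  have h1 : IntegrableOn (fun t => Θ' t * Real.exp (-ν * t)) (Set.Ioi (0:ℝ)) volume := by
    refine ((hΘ'2.add hexp2ν).div_const 2).mono'
      (hΘ'meas.mul hexpcont.aestronglyMeasurable.restrict) ?_
    filter_upwards with t
    simp only [Real.norm_eq_abs, abs_mul, abs_exp, Pi.add_apply]
    have he : Real.exp (-(2*ν) * t) = Real.exp (-ν * t) * Real.exp (-ν * t) := by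
      rw [← Real.exp_add]; ring_nf
    rw [he]
    nlinarith [sq_nonneg (|Θ' t| - Real.exp (-ν * t)), abs_nonneg (Θ' t),
      Real.exp_pos (-ν * t), sq_abs (Θ' t)]
  -- FTC on (0,∞) for g = Θ e^{-νt}
  have hgderiv : ∀ x ∈ Set.Ici (0:ℝ), HasDerivAt (fun t => Θ t * Real.exp (-ν * t))
      (Θ' x * Real.exp (-ν * x) - ν * (Θ x * Real.exp (-ν * x))) x := by
    intro x hx
    have he : HasDerivAt (fun t => Real.exp (-ν * t)) (-(ν * Real.exp (-ν * x))) x := by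
      have := (ProbabilityTheory.hasDerivAt_neg_exp_mul_exp (r := ν) (x := x)).neg
      simpa [neg_mul, Pi.neg_def] using this
    have := (hderiv x hx).mul he
    exact this.congr_deriv (by ring)
  have hg'int : IntegrableOn
      (fun t => Θ' t * Real.exp (-ν * t) - ν * (Θ t * Real.exp (-ν * t)))
      (Set.Ioi (0:ℝ)) volume := h1.sub (hint.const_mul ν)
  have key : ∫ t in Set.Ioi (0:ℝ), Θ' t * Real.exp (-ν * t) = -Θ 0 := by
    have h2 := integral_Ioi_of_hasDerivAt_of_tendsto' hgderiv hg'int hgtend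
    rw [integral_sub h1 (hint.const_mul ν), integral_const_mul ν _, horth, mul_zero,
      sub_zero] at h2
    rw [h2]
    norm_num
  -- the Cauchy–Schwarz / AM-GM bound
  have hval2 : ∫ t in Set.Ioi (0:ℝ), Real.exp (-(2*ν) * t) = 1/(2*ν) := by
    have := integral_exp_neg_mul_Ioi_zero (b := 2*ν) (by positivity)
    simpa [neg_mul] using this
  have key2 : ∀ c : ℝ, 0 < c → |Θ 0| ≤ A/(2*c) + c/(4*ν) := by
    intro c hc
    have hb1 : |Θ 0| ≤ ∫ t in Set.Ioi (0:ℝ), |Θ' t * Real.exp (-ν * t)| := by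
      have := norm_integral_le_integral_norm (μ := volume.restrict (Set.Ioi 0))
        (f := fun t => Θ' t * Real.exp (-ν * t))
      rw [key, norm_neg, Real.norm_eq_abs] at this
      simp only [Real.norm_eq_abs] at this
      exact this
    have hb2 : ∫ t in Set.Ioi (0:ℝ), |Θ' t * Real.exp (-ν * t)|
        ≤ ∫ t in Set.Ioi (0:ℝ), ((Θ' t)^2/(2*c) + (c/2) * Real.exp (-(2*ν) * t)) := by
      refine integral_mono h1.abs ((hΘ'2.div_const (2*c)).add (hexp2ν.const_mul (c/2))) ?_
      intro t
      simp only [abs_mul, abs_exp, Pi.add_apply]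
      have he : Real.exp (-(2*ν) * t) = Real.exp (-ν * t) * Real.exp (-ν * t) := by
        rw [← Real.exp_add]; ring_nf
      rw [he]
      have h4 : |Θ' t| * Real.exp (-ν * t) * (2 * c)
          ≤ (Θ' t)^2 + c^2 * (Real.exp (-ν * t))^2 := by
        nlinarith [sq_nonneg (|Θ' t| - c * Real.exp (-ν * t)), sq_abs (Θ' t)]
      have hc2 : (0:ℝ) < 2 * c := by positivity
      rw [← sub_nonneg]
      have heq : (Θ' t)^2 / (2*c) + c/2 * (Real.exp (-ν * t) * Real.exp (-ν * t))
          - |Θ' t| * Real.exp (-ν * t)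
          = ((Θ' t)^2 + c^2 * (Real.exp (-ν * t))^2
              - |Θ' t| * Real.exp (-ν * t) * (2*c)) / (2*c) := by
        field_simp
      rw [heq]
      exact div_nonneg (by linarith) (le_of_lt hc2)
    have hb3 : ∫ t in Set.Ioi (0:ℝ), ((Θ' t)^2/(2*c) + (c/2) * Real.exp (-(2*ν) * t))
        = A/(2*c) + c/(4*ν) := by
      rw [integral_add (hΘ'2.div_const (2*c)) (hexp2ν.const_mul (c/2)), integral_div,
        integral_const_mul (c/2) _, hval2, ← hAdef]
      field_simp
      ring
    linarith [le_trans hb1 (hb2.trans_eq hb3)]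
  -- conclude
  rcases eq_or_ne (Θ 0) 0 with h0 | h0
  · rw [h0]
    nlinarith [hA]
  · have habs0 : 0 < |Θ 0| := abs_pos.mpr h0
    have hc : 0 < 2*ν*|Θ 0| := by positivity
    have hkey := key2 (2*ν*|Θ 0|) hc
    have h6 : (2*ν*|Θ 0|)/(4*ν) = |Θ 0|/2 := by field_simp; ring
    rw [h6] at hkey
    have h8 : |Θ 0|/2 ≤ A/(2*(2*ν*|Θ 0|)) := by linarith
    rw [div_le_div_iff₀ (by norm_num) (by positivity)] at h8
    rw [ge_iff_le]
    nlinarith [sq_abs (Θ 0)]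
end

section
/- Let ν, L > 0 and let a : (−∞,−L] → ℝ be a C² function with a, a' ∈ L²(−∞,−L), a(x)→0 and a'(x)→0 as x→−∞, satisfying a'' (x) + ν² a(x) = f₂(x) with x·f₂ ∈ L²(−∞,−L). Then ν²·∫_{−∞}^{−L} a(x)² dx ≤ ∫_{−∞}^{−L} x²·f₂(x)² dx. -/
open MeasureTheory Real

/-- ODE estimate (eq (gggg)) from Section 5 of the paper. -/
theorem ode_estimate_halfline
    (a a' a'' f₂ : ℝ → ℝ) (ν L : ℝ) (hν : 0 < ν) (hL : 0 < L)
    (hderiv : ∀ x ∈ Set.Iic (-L), HasDerivAt a (a' x) x)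
    (hderiv' : ∀ x ∈ Set.Iic (-L), HasDerivAt a' (a'' x) x)
    (ha2 : IntegrableOn (fun x => (a x)^2) (Set.Iic (-L)) volume)
    (ha'2 : IntegrableOn (fun x => (a' x)^2) (Set.Iic (-L)) volume)
    (hlim : Filter.Tendsto a Filter.atBot (nhds 0))
    (hlim' : Filter.Tendsto a' Filter.atBot (nhds 0))
    (hode : ∀ x ∈ Set.Iic (-L), a'' x + ν^2 * a x = f₂ x)
    (hf₂ : IntegrableOn (fun x => x^2 * (f₂ x)^2) (Set.Iic (-L)) volume) :
    ν^2 * ∫ x in Set.Iic (-L), (a x)^2 ≤ ∫ x in Set.Iic (-L), x^2 * (f₂ x)^2 := by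
  set E : ℝ → ℝ := fun x => (a' x)^2 + ν^2 * (a x)^2 with hE_def
  set h : ℝ → ℝ := fun x => 2 * a' x * f₂ x with hh_def
  -- derivative of E
  have hEderiv : ∀ x ∈ Set.Iic (-L), HasDerivAt E (h x) x := by
    intro x hx
    have h1 : HasDerivAt (fun y => a' y ^ 2 + ν^2 * a y ^ 2) _ x := ((hderiv' x hx).pow 2).add ((((hderiv x hx)).pow 2).const_mul (ν^2))
    convert h1 using 1
    show 2 * a' x * f₂ x = _
    rw [← hode x hx]
    push_cast
    ring
  -- continuity / measurability
  have hacont : ContinuousOn a (Set.Iic (-L)) :=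
    fun x hx => (hderiv x hx).continuousAt.continuousWithinAt
  have ha'cont : ContinuousOn a' (Set.Iic (-L)) :=
    fun x hx => (hderiv' x hx).continuousAt.continuousWithinAt
  have hams : AEStronglyMeasurable a (volume.restrict (Set.Iic (-L))) :=
    hacont.aestronglyMeasurable measurableSet_Iic
  have ha'ms : AEStronglyMeasurable a' (volume.restrict (Set.Iic (-L))) :=
    ha'cont.aestronglyMeasurable measurableSet_Iic
  have hf₂ms : AEStronglyMeasurable f₂ (volume.restrict (Set.Iic (-L))) := by
    have hrep : AEStronglyMeasurable (fun x => deriv a' x + ν^2 * a x)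
        (volume.restrict (Set.Iic (-L))) :=
      (measurable_deriv a').aestronglyMeasurable.add (hams.const_mul _)
    refine hrep.congr ?_
    filter_upwards [ae_restrict_mem measurableSet_Iic] with x hx
    rw [(hderiv' x hx).deriv, hode x hx]
  have hhms : AEStronglyMeasurable h (volume.restrict (Set.Iic (-L))) :=
    (ha'ms.const_mul 2).mul hf₂ms
  -- integrability
  have hE_int : IntegrableOn E (Set.Iic (-L)) volume := ha'2.add (ha2.const_mul _)
  have hh_int : IntegrableOn h (Set.Iic (-L)) volume := by
    refine Integrable.mono' (ha'2.add (hf₂.const_mul (L⁻¹^2))) hhms ?_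
    filter_upwards [ae_restrict_mem measurableSet_Iic] with x hx
    have hx2 : L^2 ≤ x^2 := by nlinarith [hx.out]
    have hL2 : (0:ℝ) < L^2 := by positivity
    have hkey : |2 * a' x * f₂ x| ≤ a' x ^ 2 + L⁻¹^2 * (x^2 * f₂ x ^2) := by
      have hLinv : L⁻¹^2 * L^2 = 1 := by field_simp
      rw [abs_le]
      constructor <;>
        nlinarith [sq_nonneg (a' x + f₂ x), sq_nonneg (a' x - f₂ x), sq_nonneg (f₂ x),
          mul_le_mul_of_nonneg_left hx2 (mul_pos (inv_pos.mpr hL2) (inv_pos.mpr hL2)).le,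
          mul_le_mul_of_nonneg_left hx2 (sq_nonneg (L⁻¹ * f₂ x))]
    simp only [Pi.add_apply, Real.norm_eq_abs]
    exact hkey
  have hxh_int : IntegrableOn (fun x => x * h x) (Set.Iic (-L)) volume := by
    refine Integrable.mono' (ha'2.add hf₂) (aestronglyMeasurable_id.mul hhms) ?_
    filter_upwards [ae_restrict_mem measurableSet_Iic] with x hx
    have hkey : |x * (2 * a' x * f₂ x)| ≤ a' x ^ 2 + x^2 * f₂ x ^2 := by
      rw [abs_le]
      constructor <;>
        nlinarith [sq_nonneg (a' x + x * f₂ x), sq_nonneg (a' x - x * f₂ x)]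
    simp only [Pi.add_apply, Real.norm_eq_abs]
    exact hkey
  -- limit of E at -∞
  have hE0 : Filter.Tendsto E Filter.atBot (nhds 0) := by
    have := (hlim'.pow 2).add ((hlim.pow 2).const_mul (ν^2))
    simpa using this
  -- E as an improper integral of h
  have hE_eq : ∀ x ≤ -L, E x = ∫ t in Set.Iic x, h t := by
    intro x hx
    have key := integral_Iic_of_hasDerivAt_of_tendsto' (f := E) (f' := h) (a := x)
      (fun t ht => hEderiv t (le_trans ht hx))
      (hh_int.mono_set (Set.Iic_subset_Iic.mpr hx)) hE0
    rw [key, sub_zero]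
  have hE_nonneg : ∀ x, 0 ≤ E x := by
    intro x; rw [hE_def]; positivity
  -- boundary term tends to 0
  have hG0 : Filter.Tendsto (fun x => x * E x) Filter.atBot (nhds 0) := by
    have hxh_abs : IntegrableOn (fun t => |t * h t|) (Set.Iic (-L)) volume := hxh_int.abs
    have hF0 : Filter.Tendsto (fun x => ∫ t in Set.Iic x, |t * h t|) Filter.atBot (nhds 0) := by
      have h1 : Filter.Tendsto (fun x => ∫ t in x..(-L), |t * h t|) Filter.atBot
          (nhds (∫ t in Set.Iic (-L), |t * h t|)) :=
        intervalIntegral_tendsto_integral_Iic (-L) hxh_abs Filter.tendsto_id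
      have h2 : Filter.Tendsto
          (fun x => (∫ t in Set.Iic (-L), |t * h t|) - ∫ t in x..(-L), |t * h t|)
          Filter.atBot (nhds 0) := by
        have := (tendsto_const_nhds (x := ∫ t in Set.Iic (-L), |t * h t|)
          (f := Filter.atBot (α := ℝ))).sub h1
        simpa using this
      refine h2.congr' ?_
      filter_upwards [Filter.Iic_mem_atBot (-L)] with x hx
      have := intervalIntegral.integral_Iic_sub_Iic (μ := volume) (f := fun t => |t * h t|)
        (hxh_abs.mono_set (Set.Iic_subset_Iic.mpr hx)) hxh_abs
      linarith [this]
    refine squeeze_zero_norm' ?_ hF0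
    filter_upwards [Filter.Iic_mem_atBot (-L)] with x hx
    have hxneg : x < 0 := lt_of_le_of_lt hx (by linarith)
    have hint_sub : IntegrableOn h (Set.Iic x) volume :=
      hh_int.mono_set (Set.Iic_subset_Iic.mpr hx)
    calc ‖x * E x‖ = |∫ t in Set.Iic x, x * h t| := by
          rw [hE_eq x hx, Real.norm_eq_abs, ← integral_const_mul]
      _ ≤ ∫ t in Set.Iic x, |x * h t| := by
          simpa only [Real.norm_eq_abs] using
            norm_integral_le_integral_norm (μ := volume.restrict (Set.Iic x))
              (f := fun t => x * h t)
      _ ≤ ∫ t in Set.Iic x, |t * h t| := by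
          refine setIntegral_mono_on ((hint_sub.const_mul x).abs)
            (hxh_abs.mono_set (Set.Iic_subset_Iic.mpr hx)) measurableSet_Iic ?_
          intro t ht
          have htneg : t ≤ x := ht
          have hxt : |x| ≤ |t| := by
            rw [abs_of_neg hxneg, abs_of_neg (lt_of_le_of_lt htneg hxneg)]; linarith
          calc |x * h t| = |x| * |h t| := abs_mul _ _
            _ ≤ |t| * |h t| := mul_le_mul_of_nonneg_right hxt (abs_nonneg _)
            _ = |t * h t| := (abs_mul _ _).symm
      _ ≤ ∫ t in Set.Iic x, |t * h t| := le_refl _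
  -- FTC for G = x * E x
  have hGderiv : ∀ x ∈ Set.Iic (-L), HasDerivAt (fun y => y * E y) (E x + x * h x) x := by
    intro x hx
    have : HasDerivAt (fun y => y * E y) (1 * E x + x * h x) x := (hasDerivAt_id' x).mul (hEderiv x hx)
    simpa [one_mul] using this
  have hGint : IntegrableOn (fun x => E x + x * h x) (Set.Iic (-L)) volume :=
    hE_int.add hxh_int
  have key : ∫ x in Set.Iic (-L), (E x + x * h x) = (-L) * E (-L) - 0 :=
    integral_Iic_of_hasDerivAt_of_tendsto' hGderiv hGint hG0
  -- put everything together
  have hsplit : ∫ x in Set.Iic (-L), (E x + x * h x)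
      = (∫ x in Set.Iic (-L), E x) + ∫ x in Set.Iic (-L), x * h x :=
    integral_add hE_int hxh_int
  have hEsplit : ∫ x in Set.Iic (-L), E x
      = (∫ x in Set.Iic (-L), (a' x)^2) + ν^2 * ∫ x in Set.Iic (-L), (a x)^2 := by
    rw [hE_def]
    rw [integral_add ha'2 (ha2.const_mul _), integral_const_mul]
  have hbd : (-L) * E (-L) ≤ 0 :=
    mul_nonpos_of_nonpos_of_nonneg (by linarith) (hE_nonneg _)
  have hxh_lb : -(∫ x in Set.Iic (-L), ((a' x)^2 + x^2 * (f₂ x)^2))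
      ≤ ∫ x in Set.Iic (-L), x * h x := by
    rw [← integral_neg]
    refine setIntegral_mono_on ((ha'2.add hf₂).neg) hxh_int measurableSet_Iic ?_
    intro x hx
    simp only [hh_def]
    nlinarith [sq_nonneg (a' x + x * f₂ x)]
  rw [integral_add ha'2 hf₂] at hxh_lb
  rw [hsplit, hEsplit] at key
  linarith
end
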